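/- Any 2-coloring of the edges of the complete graph on 18 vertices contains a monochromatic complete subgraph on 4 vertices (i.e., R(4,4) ≤ 18). -/

import Mathlib

namespace R44aux

abbrev V := Fin 18

/-- `S` is monochromatic with color `b`. -/
def Mono (c : V → V → Bool) (b : Bool) (S : Finset V) : Prop :=
  ∀ i ∈ S, ∀ j ∈ S, i ≠ j → c i j = b

/-- Ramsey property: inside `T` there is a `b`-mono set of size `s` or a `!b`-mono set
of size `t`. -/
def Q (c : V → V → Bool) (b : Bool) (s t : ℕ) (T : Finset V) : Prop :=
  (∃ S ⊆ T, S.card = s ∧ Mono c b S) ∨ (∃ S ⊆ T, S.card = t ∧ Mono c (!b) S)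

theorem Q.mono {c b s t} {T T' : Finset V} (h : Q c b s t T') (hT : T' ⊆ T) :
    Q c b s t T := by
  rcases h with ⟨S, hS, h1, h2⟩ | ⟨S, hS, h1, h2⟩
  · exact Or.inl ⟨S, hS.trans hT, h1, h2⟩
  · exact Or.inr ⟨S, hS.trans hT, h1, h2⟩

theorem mono_insert {c : V → V → Bool} (hc : ∀ i j, c i j = c j i) {b : Bool}
    {v : V} {S : Finset V} (hvS : v ∉ S) (hnb : ∀ u ∈ S, c v u = b)
    (hm : Mono c b S) : Mono c b (insert v S) := by
  intro i hi j hj hij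
  rcases Finset.mem_insert.mp hi with h1 | h1 <;>
    rcases Finset.mem_insert.mp hj with h2 | h2
  · exact absurd (h1.trans h2.symm) hij
  · subst h1; exact hnb j h2
  · subst h2; rw [hc]; exact hnb i h1
  · exact hm i h1 j h2 hij

/-- Extension step: a mono set inside the `b`-neighborhood of `v` extends by `v`. -/
theorem exists_insert {c : V → V → Bool} (hc : ∀ i j, c i j = c j i) {b : Bool}
    {v : V} {T A S : Finset V} (hv : v ∈ T) (hA : A ⊆ T.erase v)
    (hAnb : ∀ u ∈ A, c v u = b) (hS : S ⊆ A) {k : ℕ} (hk : S.card = k)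
    (hm : Mono c b S) :
    ∃ S' ⊆ T, S'.card = k + 1 ∧ Mono c b S' := by
  have hvS : v ∉ S := fun h => (Finset.mem_erase.mp (hA (hS h))).1 rfl
  refine ⟨insert v S, ?_, ?_, mono_insert hc hvS (fun u hu => hAnb u (hS hu)) hm⟩
  · intro x hx
    rcases Finset.mem_insert.mp hx with rfl | hx
    · exact hv
    · exact Finset.mem_of_mem_erase (hA (hS hx))
  · rw [Finset.card_insert_of_notMem hvS, hk]

theorem bool_ne {x b : Bool} (h : ¬ x = b) : x = !b := by
  cases x <;> cases b <;> simp_all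

/-- `R(2,t) ≤ t`. -/
theorem Q2 (c : V → V → Bool) (hc : ∀ i j, c i j = c j i) (b : Bool) (t : ℕ)
    (T : Finset V) (hT : t ≤ T.card) : Q c b 2 t T := by
  by_cases h : ∃ i ∈ T, ∃ j ∈ T, i ≠ j ∧ c i j = b
  · obtain ⟨i, hi, j, hj, hij, hcij⟩ := h
    left
    refine ⟨{i, j}, ?_, Finset.card_pair hij, ?_⟩
    · intro x hx; rcases Finset.mem_insert.mp hx with rfl | hx
      · exact hi
      · rw [Finset.mem_singleton.mp hx]; exact hj
    · intro x hx y hy hxy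
      rcases Finset.mem_insert.mp hx with h1 | h1 <;>
        rcases Finset.mem_insert.mp hy with h2 | h2
      · exact absurd (h1.trans h2.symm) hxy
      · rw [h1, Finset.mem_singleton.mp h2]; exact hcij
      · rw [Finset.mem_singleton.mp h1, h2, hc]; exact hcij
      · exact absurd ((Finset.mem_singleton.mp h1).trans
          (Finset.mem_singleton.mp h2).symm) hxy
  · push_neg at h
    obtain ⟨S, hS, hScard⟩ := Finset.exists_subset_card_eq hT
    right
    refine ⟨S, hS, hScard, fun i hi j hj hij => ?_⟩
    exact bool_ne (fun hb => (h i (hS hi) j (hS hj) hij) hb)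

/-- The two neighborhoods of a vertex. -/
def Nb (c : V → V → Bool) (b : Bool) (v : V) (T : Finset V) : Finset V :=
  (T.erase v).filter (fun u => c v u = b)

theorem Nb_subset {c b v T} : Nb c b v T ⊆ T.erase v := Finset.filter_subset _ _

theorem Nb_color {c b v T} : ∀ u ∈ Nb c b v T, c v u = b :=
  fun u hu => (Finset.mem_filter.mp hu).2

theorem Nb_card {c : V → V → Bool} {b : Bool} {v : V} {T : Finset V} :
    (Nb c b v T).card + (Nb c (!b) v T).card = (T.erase v).card := by
  have : Nb c (!b) v T = (T.erase v).filter (fun u => ¬ c v u = b) := by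
    apply Finset.filter_congr
    intro u _
    constructor
    · intro h; rw [h]; cases b <;> simp
    · exact bool_ne
  rw [Nb, this]
  exact Finset.card_filter_add_card_filter_not _

/-- `R(3,3) ≤ 6`. -/
theorem Q33 (c : V → V → Bool) (hc : ∀ i j, c i j = c j i) (b : Bool)
    (T : Finset V) (hT : 6 ≤ T.card) : Q c b 3 3 T := by
  have hne : T.Nonempty := Finset.card_pos.mp (by omega)
  obtain ⟨v, hv⟩ := hne
  have hcard : 5 ≤ (T.erase v).card := by
    rw [Finset.card_erase_of_mem hv]; omega
  have hsum : (Nb c b v T).card + (Nb c (!b) v T).card ≥ 5 := by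
    rw [Nb_card]; omega
  have hTT : ∀ bb vv, Nb c bb vv T ⊆ T := fun bb vv =>
    (Nb_subset).trans (Finset.erase_subset _ _)
  rcases le_or_gt 3 (Nb c b v T).card with hA | hA
  · rcases Q2 c hc b 3 (Nb c b v T) hA with ⟨S, hS, h2, hm⟩ | ⟨S, hS, h2, hm⟩
    · left; exact exists_insert hc hv Nb_subset Nb_color hS h2 hm
    · right; exact ⟨S, hS.trans (hTT b v), h2, hm⟩
  · have hB : 3 ≤ (Nb c (!b) v T).card := by omega
    rcases Q2 c hc (!b) 3 (Nb c (!b) v T) hB with ⟨S, hS, h2, hm⟩ | ⟨S, hS, h2, hm⟩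
    · right; exact exists_insert hc hv Nb_subset Nb_color hS h2 hm
    · left
      rw [Bool.not_not] at hm
      exact ⟨S, hS.trans (hTT (!b) v), h2, hm⟩


/-- The `b`-colored graph restricted to `T`, used for the handshake parity argument. -/
def RG (c : V → V → Bool) (b : Bool) (T : Finset V) : SimpleGraph V where
  Adj u w := u ∈ T ∧ w ∈ T ∧ u ≠ w ∧ c u w = b ∧ c w u = b
  symm := by
    refine ⟨fun u w h => ?_⟩
    exact ⟨h.2.1, h.1, h.2.2.1.symm, h.2.2.2.2, h.2.2.2.1⟩
  loopless := by refine ⟨fun u h => ?_⟩; exact h.2.2.1 rfl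

instance instDecRG (c : V → V → Bool) (b : Bool) (T : Finset V) :
    DecidableRel (RG c b T).Adj :=
  fun u w => inferInstanceAs
    (Decidable (u ∈ T ∧ w ∈ T ∧ u ≠ w ∧ c u w = b ∧ c w u = b))

theorem neighborFinset_eq {c : V → V → Bool} (hc : ∀ i j, c i j = c j i)
    {b : Bool} {T : Finset V} {v : V} (hv : v ∈ T) :
    (RG c b T).neighborFinset v = Nb c b v T := by
  ext u
  simp only [SimpleGraph.mem_neighborFinset, Nb, Finset.mem_filter, Finset.mem_erase]
  constructor
  · rintro ⟨_, hu, hne, h1, _⟩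
    exact ⟨⟨hne.symm, hu⟩, h1⟩
  · rintro ⟨⟨hne, hu⟩, hb⟩
    exact ⟨hv, hu, hne.symm, hb, by rw [← hc]; exact hb⟩

theorem deg_eq {c : V → V → Bool} (hc : ∀ i j, c i j = c j i)
    {b : Bool} {T : Finset V} {v : V} (hv : v ∈ T) :
    (RG c b T).degree v = (Nb c b v T).card := by
  rw [← SimpleGraph.card_neighborFinset_eq_degree, neighborFinset_eq hc hv]

theorem deg_zero {c : V → V → Bool} {b : Bool} {T : Finset V} {v : V}
    (hv : v ∉ T) : (RG c b T).degree v = 0 := by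
  rw [← SimpleGraph.card_neighborFinset_eq_degree, Finset.card_eq_zero]
  ext u
  simp only [SimpleGraph.mem_neighborFinset, Finset.notMem_empty, iff_false]
  intro h
  exact hv h.1

/-- `R(3,4) ≤ 9`, via the parity (handshake) argument. -/
theorem Q34 (c : V → V → Bool) (hc : ∀ i j, c i j = c j i) (b : Bool)
    (T : Finset V) (hT : 9 ≤ T.card) : Q c b 3 4 T := by
  obtain ⟨T', hT'sub, hT'⟩ := Finset.exists_subset_card_eq hT
  refine Q.mono ?_ hT'sub
  have hTT : ∀ (bb : Bool) (vv : V), Nb c bb vv T' ⊆ T' := fun bb vv =>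
    (Nb_subset).trans (Finset.erase_subset _ _)
  by_cases h1 : ∃ v ∈ T', 4 ≤ (Nb c b v T').card
  · obtain ⟨v, hv, h4⟩ := h1
    rcases Q2 c hc b 4 (Nb c b v T') h4 with ⟨S, hS, h2, hm⟩ | ⟨S, hS, h2, hm⟩
    · left; exact exists_insert hc hv Nb_subset Nb_color hS h2 hm
    · right; exact ⟨S, hS.trans (hTT b v), h2, hm⟩
  by_cases h2 : ∃ v ∈ T', 6 ≤ (Nb c (!b) v T').card
  · obtain ⟨v, hv, h6⟩ := h2
    rcases Q33 c hc (!b) (Nb c (!b) v T') h6 with ⟨S, hS, h3, hm⟩ | ⟨S, hS, h3, hm⟩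
    · right; exact exists_insert hc hv Nb_subset Nb_color hS h3 hm
    · left
      rw [Bool.not_not] at hm
      exact ⟨S, hS.trans (hTT (!b) v), h3, hm⟩
  -- parity case: every vertex has `b`-degree exactly 3
  exfalso
  push_neg at h1 h2
  have hdeg : ∀ v ∈ T', (Nb c b v T').card = 3 := by
    intro v hv
    have hcards := Nb_card (c := c) (b := b) (v := v) (T := T')
    have h1v := h1 v hv
    have h2v := h2 v hv
    have herase : (T'.erase v).card = 8 := by
      rw [Finset.card_erase_of_mem hv, hT']
    omega
  have hhs := SimpleGraph.sum_degrees_eq_twice_card_edges (RG c b T')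
  have hzero : ∀ v ∈ Finset.univ, v ∉ T' → (RG c b T').degree v = 0 :=
    fun v _ hv => deg_zero hv
  rw [← Finset.sum_subset (Finset.subset_univ T') hzero] at hhs
  have hsum : ∑ v ∈ T', (RG c b T').degree v = 27 := by
    rw [Finset.sum_congr rfl (fun v hv => by rw [deg_eq hc hv, hdeg v hv])]
    rw [Finset.sum_const, hT', smul_eq_mul]
  omega

end R44aux

theorem ramsey_four_four_le_eighteen
    (c : Fin 18 → Fin 18 → Bool)
    (hc : ∀ i j, c i j = c j i) :
    ∃ (S : Finset (Fin 18)) (b : Bool), S.card = 4 ∧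
      ∀ i ∈ S, ∀ j ∈ S, i ≠ j → c i j = b := by
  classical
  open R44aux in
  have hv : (0 : Fin 18) ∈ (Finset.univ : Finset (Fin 18)) := Finset.mem_univ _
  have herase : ((Finset.univ : Finset (Fin 18)).erase 0).card = 17 := by
    rw [Finset.card_erase_of_mem hv, Finset.card_univ]
    rfl
  have hcards := R44aux.Nb_card (c := c) (b := true) (v := 0)
    (T := (Finset.univ : Finset (Fin 18)))
  rw [herase] at hcards
  have hfalse : R44aux.Nb c (!true) 0 Finset.univ = R44aux.Nb c false 0 Finset.univ := rfl
  rcases le_or_gt 9 (R44aux.Nb c true 0 Finset.univ).card with h9 | h9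
  · rcases R44aux.Q34 c hc true (R44aux.Nb c true 0 Finset.univ) h9 with
      ⟨S, hS, h3, hm⟩ | ⟨S, hS, h4, hm⟩
    · obtain ⟨S', _, hS'4, hm'⟩ := R44aux.exists_insert hc hv R44aux.Nb_subset
        R44aux.Nb_color hS h3 hm
      exact ⟨S', true, hS'4, hm'⟩
    · exact ⟨S, false, h4, hm⟩
  · have h9' : 9 ≤ (R44aux.Nb c false 0 Finset.univ).card := by
      rw [← hfalse]; omega
    rcases R44aux.Q34 c hc false (R44aux.Nb c false 0 Finset.univ) h9' with
      ⟨S, hS, h3, hm⟩ | ⟨S, hS, h4, hm⟩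
    · obtain ⟨S', _, hS'4, hm'⟩ := R44aux.exists_insert hc hv R44aux.Nb_subset
        R44aux.Nb_color hS h3 hm
      exact ⟨S', false, hS'4, hm'⟩
    · exact ⟨S, true, h4, hm⟩
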